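/- arXiv:0911.4151 — 6 statements merged into one kernel-verified Lean document; each statement's English description precedes it below -/
import Mathlib

section
/- Let g : ℝ^d → ℝ̄ be a convex function and let y₁ < y₂ < y₃ be real numbers with the sublevel set {x : g(x) ≤ y₁} nonempty. Then μ({g ≤ y₃}) ≤ ((y₃ − y₁)/(y₂ − y₁))^d · μ({g ≤ y₂}), where μ is Lebesgue measure on ℝ^d. -/
open MeasureTheory Pointwise

/-- Convexity for extended-real-valued functions (convex functions `ℝ^d → ℝ ∪ {±∞}`). -/
def ERealConvex {E : Type*} [AddCommGroup E] [Module ℝ E] (g : E → EReal) : Prop :=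
  ∀ x y : E, ∀ a b : ℝ, 0 ≤ a → 0 ≤ b → a + b = 1 →
    g (a • x + b • y) ≤ (a : EReal) * g x + (b : EReal) * g y

theorem sublevel_measure_growth (d : ℕ) (g : (Fin d → ℝ) → EReal)
    (hg : ERealConvex g)
    (y₁ y₂ y₃ : ℝ) (h12 : y₁ < y₂) (h23 : y₂ < y₃)
    (hne : {x | g x ≤ (y₁ : EReal)}.Nonempty) :
    volume {x | g x ≤ (y₃ : EReal)} ≤
      ENNReal.ofReal (((y₃ - y₁) / (y₂ - y₁)) ^ d) * volume {x | g x ≤ (y₂ : EReal)} := by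
  obtain ⟨x₀, hx₀⟩ := hne
  set t : ℝ := (y₂ - y₁) / (y₃ - y₁) with ht_def
  have h13 : y₁ < y₃ := h12.trans h23
  have ht_pos : 0 < t := div_pos (by linarith) (by linarith)
  have ht_le : t ≤ 1 := by
    rw [div_le_one (by linarith)]; linarith
  have ht1 : 0 ≤ 1 - t := by linarith
  -- the affine contraction maps lev y₃ into lev y₂
  have hsub : (fun x => x₀ + t • (x - x₀)) '' {x | g x ≤ (y₃ : EReal)}
      ⊆ {x | g x ≤ (y₂ : EReal)} := by
    rintro _ ⟨x, hx, rfl⟩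
    have heq : x₀ + t • (x - x₀) = t • x + (1 - t) • x₀ := by
      simp [smul_sub, sub_smul]; abel
    show g (x₀ + t • (x - x₀)) ≤ (y₂ : EReal)
    rw [heq]
    calc g (t • x + (1 - t) • x₀) ≤ (t : EReal) * g x + ((1 - t : ℝ) : EReal) * g x₀ :=
          hg x x₀ t (1 - t) ht_pos.le ht1 (by ring)
      _ ≤ (t : EReal) * (y₃ : EReal) + ((1 - t : ℝ) : EReal) * (y₁ : EReal) := by
          gcongr <;> first
            | exact hx | exact hx₀
            | exact EReal.coe_nonneg.2 ht_pos.le | exact EReal.coe_nonneg.2 ht1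
      _ = ((t * y₃ + (1 - t) * y₁ : ℝ) : EReal) := by
          rw [← EReal.coe_mul, ← EReal.coe_mul, ← EReal.coe_add]
      _ = (y₂ : EReal) := by
          norm_cast
          have h : t * (y₃ - y₁) = y₂ - y₁ :=
            div_mul_cancel₀ _ (by linarith : y₃ - y₁ ≠ 0)
          linear_combination h
  -- compute the volume of the image
  have himg : (fun x => x₀ + t • (x - x₀)) '' {x | g x ≤ (y₃ : EReal)}
      = x₀ +ᵥ (t • ((-x₀) +ᵥ {x | g x ≤ (y₃ : EReal)})) := by
    ext z
    simp only [Set.mem_image, Set.mem_vadd_set, Set.mem_smul_set, vadd_eq_add]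
    constructor
    · rintro ⟨x, hx, rfl⟩
      exact ⟨t • (x - x₀), ⟨x - x₀, ⟨x, hx, by abel⟩, rfl⟩, rfl⟩
    · rintro ⟨_, ⟨_, ⟨x, hx, rfl⟩, rfl⟩, rfl⟩
      exact ⟨x, hx, by rw [neg_add_eq_sub]⟩
  have hvol : volume ((fun x => x₀ + t • (x - x₀)) '' {x | g x ≤ (y₃ : EReal)})
      = ENNReal.ofReal (t ^ d) * volume {x | g x ≤ (y₃ : EReal)} := by
    rw [himg, measure_vadd, Measure.addHaar_smul_of_nonneg _ ht_pos.le, measure_vadd]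
    congr 2
    simp
  have key : ENNReal.ofReal (t ^ d) * volume {x | g x ≤ (y₃ : EReal)}
      ≤ volume {x | g x ≤ (y₂ : EReal)} := by
    rw [← hvol]; exact measure_mono hsub
  calc volume {x | g x ≤ (y₃ : EReal)}
      = ENNReal.ofReal (((y₃ - y₁) / (y₂ - y₁)) ^ d) *
        (ENNReal.ofReal (t ^ d) * volume {x | g x ≤ (y₃ : EReal)}) := by
        rw [← mul_assoc, ← ENNReal.ofReal_mul (pow_nonneg (div_nonneg (by linarith) (by linarith)) d), ← mul_pow]
        have : (y₃ - y₁) / (y₂ - y₁) * t = 1 := by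
          rw [ht_def]
          field_simp [show y₂ - y₁ ≠ 0 by linarith, show y₃ - y₁ ≠ 0 by linarith]
        rw [this, one_pow, ENNReal.ofReal_one, one_mul]
    _ ≤ ENNReal.ofReal (((y₃ - y₁) / (y₂ - y₁)) ^ d) * volume {x | g x ≤ (y₂ : EReal)} := by
        gcongr
end

section
/- If g : ℝ^d → ℝ̄ is a convex function, then the function y ↦ μ({x : g(x) ≤ y}) is continuous on the open interval (inf g, sup g). -/
open MeasureTheory Set ENNReal

lemma sublevel_key (d : ℕ) (g : (Fin d → ℝ) → EReal) (hg : ERealConvex g)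
    (x0 : Fin d → ℝ) (c s t : ℝ) (hx0 : g x0 ≤ (c : EReal)) (hcs : c < s) (hst : s ≤ t) :
    ENNReal.ofReal (((s - c) / (t - c)) ^ d) * volume {x | g x ≤ (t : EReal)}
      ≤ volume {x | g x ≤ (s : EReal)} := by
  have htc : (0:ℝ) < t - c := by linarith
  set l : ℝ := (t - s) / (t - c) with hl
  set r : ℝ := (s - c) / (t - c) with hr
  have hl0 : 0 ≤ l := div_nonneg (by linarith) htc.le
  have hr0 : 0 ≤ r := div_nonneg (by linarith) htc.le
  have hlr : l + r = 1 := by rw [hl, hr]; field_simp; ring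
  have himg : (fun x => l • x0 + r • x) '' {x | g x ≤ (t:EReal)} ⊆ {x | g x ≤ (s:EReal)} := by
    rintro _ ⟨x, hx, rfl⟩
    have h1 : g (l • x0 + r • x) ≤ (l : EReal) * g x0 + (r : EReal) * g x :=
      hg x0 x l r hl0 hr0 hlr
    have h2 : (l : EReal) * g x0 ≤ (l : EReal) * (c : EReal) :=
      mul_le_mul_of_nonneg_left hx0 (by exact_mod_cast hl0)
    have h3 : (r : EReal) * g x ≤ (r : EReal) * (t : EReal) :=
      mul_le_mul_of_nonneg_left hx (by exact_mod_cast hr0)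
    have h5 : l * c + r * t = s := by rw [hl, hr]; field_simp; ring
    have h4 : (l : EReal) * (c:EReal) + (r:EReal)*(t:EReal) = ((s : ℝ) : EReal) := by
      rw [← h5]; push_cast; ring
    exact le_trans h1 (le_trans (add_le_add h2 h3) h4.le)
  have him : volume ((fun x => l • x0 + r • x) '' {x | g x ≤ (t:EReal)})
      = ENNReal.ofReal (r ^ d) * volume {x | g x ≤ (t:EReal)} := by
    have hcomp : (fun x : Fin d → ℝ => l • x0 + r • x) = (fun y => l • x0 + y) ∘ (fun x => r • x) := rfl
    rw [hcomp, Set.image_comp, Set.image_smul, Set.image_add_left, measure_preimage_add,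
      Measure.addHaar_smul_of_nonneg _ hr0]
    rw [Module.finrank_fin_fun]
  calc ENNReal.ofReal (r ^ d) * volume {x | g x ≤ (t:EReal)}
      = volume ((fun x => l • x0 + r • x) '' {x | g x ≤ (t:EReal)}) := him.symm
    _ ≤ volume {x | g x ≤ (s:EReal)} := measure_mono himg

theorem sublevel_measure_continuous (d : ℕ) (g : (Fin d → ℝ) → EReal)
    (hg : ERealConvex g) (hbot : ∀ x, g x ≠ ⊥) (hproper : ∃ x, g x ≠ ⊤)
    (y : ℝ) (h1 : (⨅ x, g x) < (y : EReal)) (h2 : (y : EReal) < ⨆ x, g x) :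
    ContinuousAt (fun t : ℝ => volume {x | g x ≤ (t : EReal)}) y := by
  obtain ⟨x0, hx0y⟩ : ∃ x, g x < (y : EReal) := iInf_lt_iff.mp h1
  obtain ⟨c, hc1, hc2⟩ := EReal.exists_between_coe_real hx0y
  have hcy : c < y := by exact_mod_cast hc2
  set F : ℝ → ℝ≥0∞ := fun t => volume {x | g x ≤ (t : EReal)} with hF
  have hmono : Monotone F := by
    intro a b hab
    apply measure_mono
    intro x hx
    exact le_trans hx (EReal.coe_le_coe_iff.mpr hab)
  have key : ∀ s t : ℝ, c < s → s ≤ t →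
      ENNReal.ofReal (((s - c) / (t - c)) ^ d) * F t ≤ F s :=
    fun s t hs hst => sublevel_key d g hg x0 c s t hc1.le hs hst
  set G : ℝ → ℝ≥0∞ := fun u => ENNReal.ofReal (((u - c) / (y - c)) ^ d) with hG
  have hGy : G y = 1 := by simp [hG, div_self (by linarith : y - c ≠ 0)]
  have hGcont : Continuous G := by
    apply ENNReal.continuous_ofReal.comp
    continuity
  -- lower bound
  have hlow : ∀ t ∈ Set.Ioc c y, G t * F y ≤ F t := fun t ht => key t y ht.1 ht.2
  have hup : ∀ t ∈ Set.Ici y, F t ≤ G t * F y := by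
    intro t ht
    have h := key y t hcy ht
    have hpos : (0:ℝ) < (y - c) / (t - c) := by
      apply div_pos (by linarith)
      have : y ≤ t := ht
      linarith
    have ha0 : ENNReal.ofReal (((y - c) / (t - c)) ^ d) ≠ 0 := by
      simp [ENNReal.ofReal_eq_zero, not_le, pow_pos hpos]
    have hatop : ENNReal.ofReal (((y - c) / (t - c)) ^ d) ≠ ⊤ := ENNReal.ofReal_ne_top
    have hinv : (ENNReal.ofReal (((y - c) / (t - c)) ^ d))⁻¹ = G t := by
      rw [← ENNReal.ofReal_inv_of_pos (pow_pos hpos d), ← inv_pow, inv_div]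
    calc F t = (ENNReal.ofReal (((y - c) / (t - c)) ^ d))⁻¹
          * (ENNReal.ofReal (((y - c) / (t - c)) ^ d) * F t) := by
            rw [← mul_assoc, ENNReal.inv_mul_cancel ha0 hatop, one_mul]
      _ ≤ (ENNReal.ofReal (((y - c) / (t - c)) ^ d))⁻¹ * F y := by
            exact mul_le_mul_right h _
      _ = G t * F y := by rw [hinv]
  -- squeeze
  have hLtend : Filter.Tendsto (fun t => G (min t y) * F y) (nhds y) (nhds (F y)) := by
    have : Filter.Tendsto (fun t => G (min t y)) (nhds y) (nhds 1) := by
      have hm : Filter.Tendsto (fun t : ℝ => min t y) (nhds y) (nhds y) := by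
        have h := Filter.Tendsto.min (Filter.tendsto_id : Filter.Tendsto id (nhds y) (nhds y))
          (tendsto_const_nhds : Filter.Tendsto (fun _ : ℝ => y) (nhds y) (nhds y))
        simpa [min_self] using h
      simpa [hGy, Function.comp_def] using (hGcont.tendsto y).comp hm
    simpa using ENNReal.Tendsto.mul_const this (Or.inl one_ne_zero)
  have hUtend : Filter.Tendsto (fun t => G (max t y) * F y) (nhds y) (nhds (F y)) := by
    have : Filter.Tendsto (fun t => G (max t y)) (nhds y) (nhds 1) := by
      have hm : Filter.Tendsto (fun t : ℝ => max t y) (nhds y) (nhds y) := by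
        have h := Filter.Tendsto.max (Filter.tendsto_id : Filter.Tendsto id (nhds y) (nhds y))
          (tendsto_const_nhds : Filter.Tendsto (fun _ : ℝ => y) (nhds y) (nhds y))
        simpa [max_self] using h
      simpa [hGy, Function.comp_def] using (hGcont.tendsto y).comp hm
    simpa using ENNReal.Tendsto.mul_const this (Or.inl one_ne_zero)
  have hev : ∀ᶠ t in nhds y, t ∈ Set.Ioi c := Ioi_mem_nhds hcy
  apply tendsto_of_tendsto_of_tendsto_of_le_of_le' hLtend hUtend
  · filter_upwards [hev] with t ht
    rcases le_total t y with h | h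
    · have hh := hlow t ⟨ht, h⟩
      rwa [inf_eq_left.mpr h]
    · calc G (min t y) * F y = F y := by rw [inf_eq_right.mpr h, hGy, one_mul]
        _ ≤ F t := hmono h
  · filter_upwards [hev] with t ht
    rcases le_total t y with h | h
    · calc F t ≤ F y := hmono h
        _ = G (max t y) * F y := by rw [sup_eq_right.mpr h, hGy, one_mul]
    · rw [sup_eq_left.mpr h]; exact hup t h
end

section
/- Let h be a nondecreasing function ℝ̄ → [0,∞] with h(−∞)=0 and h(+∞)=+∞, y₀ = inf{y : h(y)>0}, and let g be a closed proper convex function on the closed positive orthant of ℝ^d with ∫ h(g(x)) dx = C < ∞. Then for every x₀ in the open positive orthant with g(x₀) > y₀, one has h(g(x₀)) ≤ C·d!/(d^d · ∏_{k=1}^d (x₀)_k). -/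
set_option maxHeartbeats 1000000

open MeasureTheory
open scoped ENNReal

lemma volume_corner_simplex (n : ℕ) : ∀ (c : ℝ), 0 ≤ c →
    volume {x : Fin n → ℝ | (∀ i, 0 ≤ x i) ∧ ∑ i, x i ≤ c}
      = ENNReal.ofReal (c ^ n / n.factorial) := by
  induction n with
  | zero =>
    intro c hc
    have : {x : Fin 0 → ℝ | (∀ i, 0 ≤ x i) ∧ ∑ i, x i ≤ c} = Set.univ := by
      ext x; simp [hc]
    rw [this]
    simp [volume_pi, Measure.pi_univ]
  | succ n ih =>
    intro c hc
    have hTm : MeasurableSet {p : ℝ × (Fin n → ℝ) | (0 ≤ p.1 ∧ ∀ i, 0 ≤ p.2 i) ∧ p.1 + ∑ i, p.2 i ≤ c} := by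
      rw [Set.setOf_and, Set.setOf_and]
      refine MeasurableSet.inter (MeasurableSet.inter ?_ ?_) ?_
      · exact measurableSet_le measurable_const measurable_fst
      · have : {p : ℝ × (Fin n → ℝ) | ∀ i, 0 ≤ p.2 i} = ⋂ i, {p | 0 ≤ p.2 i} := by ext p; simp
        rw [this]
        exact MeasurableSet.iInter fun i =>
          measurableSet_le measurable_const (measurable_snd.eval)
      · exact measurableSet_le (measurable_fst.add <| Finset.measurable_sum _
          fun i _ => (measurable_pi_apply i).comp measurable_snd) measurable_const
    have hpre : (MeasurableEquiv.piFinSuccAbove (fun _ : Fin (n+1) => ℝ) 0) ⁻¹'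
        {p : ℝ × (Fin n → ℝ) | (0 ≤ p.1 ∧ ∀ i, 0 ≤ p.2 i) ∧ p.1 + ∑ i, p.2 i ≤ c}
        = {x : Fin (n+1) → ℝ | (∀ i, 0 ≤ x i) ∧ ∑ i, x i ≤ c} := by
      ext x
      simp [MeasurableEquiv.piFinSuccAbove, Fin.forall_fin_succ, Fin.sum_univ_succ,
        Fin.succAbove_zero, Fin.tail]
    have hvol : volume {x : Fin (n+1) → ℝ | (∀ i, 0 ≤ x i) ∧ ∑ i, x i ≤ c}
        = (volume : Measure (ℝ × (Fin n → ℝ)))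
          {p | (0 ≤ p.1 ∧ ∀ i, 0 ≤ p.2 i) ∧ p.1 + ∑ i, p.2 i ≤ c} := by
      rw [← hpre]
      exact (volume_preserving_piFinSuccAbove (fun _ : Fin (n+1) => ℝ) 0).measure_preimage_equiv _
    rw [hvol, Measure.volume_eq_prod, Measure.prod_apply hTm]
    have hslice : ∀ t : ℝ, volume (Prod.mk t ⁻¹'
        {p : ℝ × (Fin n → ℝ) | (0 ≤ p.1 ∧ ∀ i, 0 ≤ p.2 i) ∧ p.1 + ∑ i, p.2 i ≤ c})
        = Set.indicator (Set.Icc 0 c) (fun t => ENNReal.ofReal ((c - t)^n / n.factorial)) t := by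
      intro t
      by_cases ht : 0 ≤ t
      · by_cases htc : t ≤ c
        · have hset : Prod.mk t ⁻¹'
              {p : ℝ × (Fin n → ℝ) | (0 ≤ p.1 ∧ ∀ i, 0 ≤ p.2 i) ∧ p.1 + ∑ i, p.2 i ≤ c}
              = {y : Fin n → ℝ | (∀ i, 0 ≤ y i) ∧ ∑ i, y i ≤ c - t} := by
            ext y
            simp only [Set.mem_preimage, Set.mem_setOf_eq, ht, true_and]
            constructor
            · rintro ⟨h1, h2⟩; exact ⟨h1, by linarith⟩
            · rintro ⟨h1, h2⟩; exact ⟨h1, by linarith⟩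
          rw [hset, ih (c - t) (by linarith), Set.indicator_of_mem (Set.mem_Icc.mpr ⟨ht, htc⟩)]
        · have hset : Prod.mk t ⁻¹'
              {p : ℝ × (Fin n → ℝ) | (0 ≤ p.1 ∧ ∀ i, 0 ≤ p.2 i) ∧ p.1 + ∑ i, p.2 i ≤ c}
              = (∅ : Set (Fin n → ℝ)) := by
            ext y
            simp only [Set.mem_preimage, Set.mem_setOf_eq, Set.mem_empty_iff_false, iff_false]
            rintro ⟨⟨-, h1⟩, h2⟩
            have : 0 ≤ ∑ i, y i := Finset.sum_nonneg fun i _ => h1 i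
            linarith
          rw [hset]
          rw [Set.indicator_of_notMem (by simp [Set.mem_Icc]; intro; linarith)]
          simp
      · have hset : Prod.mk t ⁻¹'
            {p : ℝ × (Fin n → ℝ) | (0 ≤ p.1 ∧ ∀ i, 0 ≤ p.2 i) ∧ p.1 + ∑ i, p.2 i ≤ c}
            = (∅ : Set (Fin n → ℝ)) := by
          ext y
          simp only [Set.mem_preimage, Set.mem_setOf_eq, Set.mem_empty_iff_false, iff_false]
          rintro ⟨⟨h0, -⟩, -⟩; exact ht h0
        rw [hset, Set.indicator_of_notMem (fun hmem => ht hmem.1)]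
        simp
    rw [lintegral_congr hslice, lintegral_indicator measurableSet_Icc]
    have hint : IntegrableOn (fun t : ℝ => (c - t)^n / n.factorial) (Set.Icc 0 c) volume := by
      apply Continuous.integrableOn_Icc
      continuity
    rw [← ofReal_integral_eq_lintegral_ofReal hint
      ((ae_restrict_iff' measurableSet_Icc).2 (Filter.Eventually.of_forall fun t ht =>
        div_nonneg (pow_nonneg (by linarith [ht.2]) n) (by positivity)))]
    congr 1
    rw [MeasureTheory.integral_Icc_eq_integral_Ioc, ← intervalIntegral.integral_of_le hc]
    rw [intervalIntegral.integral_div]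
    have := intervalIntegral.integral_comp_sub_left (a := 0) (b := c) (fun x => x ^ n) c
    rw [this, sub_zero, sub_self, integral_pow]
    rw [Nat.factorial_succ]
    push_cast
    field_simp
    simp

lemma volume_scaled_simplex (d : ℕ) (b : Fin d → ℝ) (hb : ∀ i, 0 < b i) (c : ℝ) (hc : 0 ≤ c) :
    volume {x : Fin d → ℝ | (∀ i, 0 ≤ x i) ∧ ∑ i, b i * x i ≤ c}
      = ENNReal.ofReal (c ^ d / (d.factorial * ∏ i, b i)) := by
  set L : (Fin d → ℝ) →ₗ[ℝ] (Fin d → ℝ) := Matrix.toLin' (Matrix.diagonal fun i => (b i)⁻¹) with hL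
  have hLapp : ∀ (x : Fin d → ℝ) (i : Fin d), L x i = (b i)⁻¹ * x i := by
    intro x i
    simp [hL, Matrix.toLin'_apply, Matrix.mulVec_diagonal]
  have himg : L '' {x : Fin d → ℝ | (∀ i, 0 ≤ x i) ∧ ∑ i, x i ≤ c}
      = {x : Fin d → ℝ | (∀ i, 0 ≤ x i) ∧ ∑ i, b i * x i ≤ c} := by
    ext y
    constructor
    · rintro ⟨x, ⟨hx1, hx2⟩, rfl⟩
      constructor
      · intro i; rw [hLapp]; exact mul_nonneg (inv_nonneg.2 (hb i).le) (hx1 i)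
      · calc ∑ i, b i * L x i = ∑ i, x i := by
              refine Finset.sum_congr rfl fun i _ => ?_
              rw [hLapp, inv_mul_eq_div, mul_comm, div_mul_cancel₀ _ (hb i).ne']
          _ ≤ c := hx2
    · rintro ⟨hy1, hy2⟩
      refine ⟨fun i => b i * y i, ⟨fun i => mul_nonneg (hb i).le (hy1 i), hy2⟩, ?_⟩
      ext i; rw [hLapp, inv_mul_eq_div, mul_comm (b i) (y i), mul_div_assoc, div_self (hb i).ne', mul_one]
  have hdet : LinearMap.det L = ∏ i, (b i)⁻¹ := by
    rw [hL, LinearMap.det_toLin', Matrix.det_diagonal]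
  rw [← himg, Measure.addHaar_image_linearMap, volume_corner_simplex d c hc, hdet,
    ← ENNReal.ofReal_mul (abs_nonneg _)]
  congr 1
  rw [abs_of_pos (Finset.prod_pos fun i _ => inv_pos.2 (hb i))]
  rw [Finset.prod_inv_distrib]
  field_simp

theorem increasing_pointwise_bound (d : ℕ)
    (h : EReal → ℝ≥0∞) (hmono : Monotone h) (hbot : h ⊥ = 0) (htop : h ⊤ = ⊤)
    (g : (Fin d → ℝ) → EReal) (hg : ERealConvex g) (hlsc : LowerSemicontinuous g)
    (hgbot : ∀ x, g x ≠ ⊥)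
    (hdom : {x | g x ≠ ⊤} = {x : Fin d → ℝ | ∀ i, 0 ≤ x i})
    (C : ℝ≥0∞) (hC : C ≠ ⊤)
    (hint : ∫⁻ x in {x : Fin d → ℝ | ∀ i, 0 ≤ x i}, h (g x) ∂volume = C)
    (x₀ : Fin d → ℝ) (hx₀ : ∀ i, 0 < x₀ i)
    (hy₀ : sInf {y : EReal | 0 < h y} < g x₀) :
    h (g x₀) ≤ C * (Nat.factorial d : ℝ≥0∞) /
      ((d : ℝ≥0∞) ^ d * ENNReal.ofReal (∏ i, x₀ i)) := by
  have hgx₀top : g x₀ ≠ ⊤ := by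
    have : x₀ ∈ {x : Fin d → ℝ | ∀ i, 0 ≤ x i} := fun i => (hx₀ i).le
    rw [← hdom] at this; exact this
  have hp : 0 < h (g x₀) := by
    obtain ⟨y, hy, hylt⟩ := sInf_lt_iff.mp hy₀
    exact lt_of_lt_of_le hy (hmono hylt.le)
  set p := h (g x₀) with hpdef
  have hmeas : Measurable fun x : Fin d → ℝ => h (g x) := hmono.measurable.comp hlsc.measurable
  -- key bound
  have key : ∀ R : Set (Fin d → ℝ), R ⊆ {x | ∀ i, 0 ≤ x i} →
      (∀ x ∈ R, g x₀ ≤ g x) → p * volume R ≤ C := by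
    intro R hRsub hRge
    calc p * volume R = ∫⁻ _ in R, p ∂volume := (setLIntegral_const R p).symm
      _ ≤ ∫⁻ x in R, h (g x) ∂volume :=
          setLIntegral_mono hmeas fun x hx => hmono (hRge x hx)
      _ ≤ ∫⁻ x in {x | ∀ i, 0 ≤ x i}, h (g x) ∂volume := lintegral_mono_set hRsub
      _ = C := hint
  -- d = 0 case
  rcases Nat.eq_zero_or_pos d with hd | hd
  · subst hd
    have huniv : {x : Fin 0 → ℝ | ∀ i, 0 ≤ x i} = Set.univ := by
      ext x; simp [Fin.forall_fin_zero_pi]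
    have hCp : C = p := by
      rw [← hint, huniv, Measure.restrict_univ]
      have heq : ∀ x : Fin 0 → ℝ, h (g x) = p := fun x => by
        rw [Subsingleton.elim x x₀]
      rw [lintegral_congr heq, lintegral_const]
      simp [volume_pi, Measure.pi_univ]
    simp only [Nat.factorial_zero, Nat.cast_one, pow_zero, Finset.univ_eq_empty,
      Finset.prod_empty, ENNReal.ofReal_one, mul_one, one_mul, div_one]
    rw [hCp]
  -- convexity of K
  have toReal : ∀ z : EReal, z ≠ ⊥ → z ≠ ⊤ → ∃ r : ℝ, z = (r : EReal) := by
    intro z hzb hzt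
    induction z with
    | bot => exact absurd rfl hzb
    | coe r => exact ⟨r, rfl⟩
    | top => exact absurd rfl hzt
  obtain ⟨w, hw⟩ := toReal (g x₀) (hgbot x₀) hgx₀top
  have hKconv : Convex ℝ {x : Fin d → ℝ | g x < g x₀} := by
    intro x hx y hy aa bb haa hbb hab
    simp only [Set.mem_setOf_eq] at hx hy ⊢
    rcases eq_or_lt_of_le haa with haa0 | haa0
    · have hbb1 : bb = 1 := by linarith
      rw [← haa0, hbb1, zero_smul, one_smul, zero_add]; exact hy
    rcases eq_or_lt_of_le hbb with hbb0 | hbb0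
    · have haa1 : aa = 1 := by linarith
      rw [← hbb0, haa1, zero_smul, one_smul, add_zero]; exact hx
    obtain ⟨u, hu⟩ := toReal (g x) (hgbot x) (fun ht => by rw [ht] at hx; exact absurd hx (by simp [hw]))
    obtain ⟨v, hv⟩ := toReal (g y) (hgbot y) (fun ht => by rw [ht] at hy; exact absurd hy (by simp [hw]))
    have hconv := hg x y aa bb haa hbb hab
    rw [hu, hv] at hconv
    rw [hu, hw] at hx
    rw [hv, hw] at hy
    have hulttop : u < w := EReal.coe_lt_coe_iff.mp hx
    have hvlttop : v < w := EReal.coe_lt_coe_iff.mp hy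
    calc g (aa • x + bb • y) ≤ (aa : EReal) * (u : EReal) + (bb : EReal) * (v : EReal) := hconv
      _ = ((aa * u + bb * v : ℝ) : EReal) := by
          rw [← EReal.coe_mul, ← EReal.coe_mul, ← EReal.coe_add]
      _ < g x₀ := by
          rw [hw, EReal.coe_lt_coe_iff]
          have hw1 : aa * w + bb * w = w := by rw [← add_mul, hab, one_mul]
          linarith [mul_lt_mul_of_pos_left hulttop haa0, mul_lt_mul_of_pos_left hvlttop hbb0]
  have hx₀K : x₀ ∉ {x : Fin d → ℝ | g x < g x₀} := fun hh => lt_irrefl (g x₀) hh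
  by_cases hKint : (interior {x : Fin d → ℝ | g x < g x₀}).Nonempty
  swap
  · -- empty interior : K null, complement infinite
    exfalso
    have hKnull : volume {x : Fin d → ℝ | g x < g x₀} = 0 := by
      refine measure_mono_null ?_ (hKconv.addHaar_frontier volume)
      intro x hx
      rw [frontier, Set.not_nonempty_iff_eq_empty.mp hKint, Set.diff_empty]
      exact subset_closure hx
    have hvol : volume ({x : Fin d → ℝ | ∀ i, 0 ≤ x i} \ {x | g x < g x₀}) = ⊤ := by
      rw [measure_diff_null hKnull]
      have : {x : Fin d → ℝ | ∀ i, 0 ≤ x i} = Set.pi Set.univ fun _ => Set.Ici (0:ℝ) := by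
        ext x; simp [Set.mem_pi, Pi.le_def]
      rw [this, volume_pi_pi]
      simp only [Real.volume_Ici, Finset.prod_const, Finset.card_univ, Fintype.card_fin]
      exact ENNReal.top_pow hd.ne'
    have := key ({x : Fin d → ℝ | ∀ i, 0 ≤ x i} \ {x | g x < g x₀}) Set.diff_subset (fun x hx => not_lt.mp hx.2)
    rw [hvol, ENNReal.mul_top hp.ne'] at this
    exact hC (top_le_iff.mp this)
  -- separation
  obtain ⟨f, hf⟩ := geometric_hahn_banach_open_point hKconv.interior isOpen_interior
    (fun hx => hx₀K (interior_subset hx))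
  have hfK : ∀ x ∈ {x : Fin d → ℝ | g x < g x₀}, f x ≤ f x₀ := by
    intro x hx
    obtain ⟨y, hy⟩ := hKint
    by_contra hlt
    push_neg at hlt
    set ε := f x - f x₀ with hε
    have hε0 : 0 < ε := by simp [hε]; linarith
    set M := |f y - f x| with hM
    have hM0 : 0 ≤ M := abs_nonneg _
    set t := min 1 (ε / (2 * (M + 1))) with ht
    have ht0 : 0 < t := lt_min one_pos (by positivity)
    have ht1 : t ≤ 1 := min_le_left _ _
    have hmem := hKconv.add_smul_sub_mem_interior hx hy ⟨ht0, ht1⟩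
    have hflt := hf _ hmem
    rw [map_add, f.map_smul, map_sub, smul_eq_mul] at hflt
    have h1 : -(t * M) ≤ t * (f y - f x) := by
      have := neg_abs_le (f y - f x)
      nlinarith
    have h2 : t * M ≤ ε / 2 := by
      have h3 : t ≤ ε / (2 * (M + 1)) := min_le_right _ _
      have h4 : t * M ≤ (ε / (2 * (M + 1))) * M :=
        mul_le_mul_of_nonneg_right h3 hM0
      have h5 : (ε / (2 * (M + 1))) * M ≤ ε / 2 := by
        rw [div_mul_eq_mul_div, div_le_div_iff₀ (by positivity) (by positivity)]
        nlinarith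
      linarith
    linarith
  -- the set where f x₀ < f x is good
  have hgood : ∀ x : Fin d → ℝ, f x₀ < f x → g x₀ ≤ g x := by
    intro x hx
    by_contra hlt
    exact absurd (hfK x (not_le.mp hlt)) (not_le.mpr hx)
  -- coordinates of f
  set a : Fin d → ℝ := fun i => f (Pi.single i 1) with ha
  have hsingle : ∀ (i : Fin d) (r : ℝ), f (Pi.single i r) = r * a i := by
    intro i r
    rw [show (Pi.single i r : Fin d → ℝ) = r • (Pi.single i (1:ℝ) : Fin d → ℝ) by
      rw [← Pi.single_smul, smul_eq_mul, mul_one], f.map_smul, smul_eq_mul]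
  have hfa : ∀ x : Fin d → ℝ, f x = ∑ i, x i * a i := by
    intro x
    conv_lhs => rw [show x = ∑ i, Pi.single i (x i) from (Finset.univ_sum_single x).symm]
    rw [map_sum]
    exact Finset.sum_congr rfl fun i _ => hsingle i (x i)
  by_cases hpos : ∃ i, 0 < a i
  · -- infinite cylinder in a positive direction
    exfalso
    obtain ⟨i, hi⟩ := hpos
    set M : ℝ := (|f x₀| + 1 + ∑ j, |a j|) / a i with hMdef
    have hM0 : 0 ≤ M := by positivity
    set P : Set (Fin d → ℝ) :=
      Set.pi Set.univ (fun j => if j = i then Set.Ici M else Set.Icc 0 1) with hP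
    have hPsub : P ⊆ {x | ∀ k, 0 ≤ x k} := by
      intro x hx k
      have := hx k (Set.mem_univ k)
      by_cases hk : k = i
      · subst hk
        simp at this
        linarith
      · simp only [if_neg hk, Set.mem_Icc] at this
        exact this.1
    have hPf : ∀ x ∈ P, f x₀ < f x := by
      intro x hx
      have hxi : M ≤ x i := by
        have := hx i (Set.mem_univ i); simpa using this
      have hrest : ∀ j ∈ Finset.univ.erase i, -|a j| ≤ x j * a j := by
        intro j hj
        have hji : j ≠ i := Finset.ne_of_mem_erase hj
        have := hx j (Set.mem_univ j)
        simp only [if_neg hji, Set.mem_Icc] at this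
        have h1 : |x j * a j| ≤ |a j| := by
          rw [abs_mul]
          have : |x j| ≤ 1 := abs_le.mpr ⟨by linarith [this.1], this.2⟩
          nlinarith [abs_nonneg (a j), abs_nonneg (x j)]
        linarith [neg_abs_le (x j * a j), abs_le.mp h1]
      have hsum : ∑ j ∈ Finset.univ.erase i, (-|a j|) ≤ ∑ j ∈ Finset.univ.erase i, x j * a j :=
        Finset.sum_le_sum hrest
      have hMai : M * a i = |f x₀| + 1 + ∑ j, |a j| := by
        rw [hMdef, div_mul_cancel₀ _ hi.ne']
      have herase : ∑ j ∈ Finset.univ.erase i, |a j| ≤ ∑ j, |a j| := by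
        exact Finset.sum_le_sum_of_subset_of_nonneg (Finset.erase_subset _ _)
          (fun j _ _ => abs_nonneg _)
      have hxiai : M * a i ≤ x i * a i := mul_le_mul_of_nonneg_right hxi hi.le
      have hfx : f x = x i * a i + ∑ j ∈ Finset.univ.erase i, x j * a j := by
        rw [hfa x, ← Finset.add_sum_erase _ _ (Finset.mem_univ i)]
      rw [hfx]
      have hneg2 : -∑ j ∈ Finset.univ.erase i, |a j| ≤ ∑ j ∈ Finset.univ.erase i, x j * a j := by
        rw [← Finset.sum_neg_distrib]
        exact hsum
      have habs : (0:ℝ) ≤ ∑ j, |a j| := Finset.sum_nonneg fun j _ => abs_nonneg (a j)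
      calc f x₀ ≤ |f x₀| := le_abs_self _
        _ < M * a i - ∑ j, |a j| := by rw [hMai]; linarith
        _ ≤ x i * a i + ∑ j ∈ Finset.univ.erase i, x j * a j := by linarith
    have hPvol : volume P = ⊤ := by
      rw [hP, volume_pi_pi]
      rw [← Finset.mul_prod_erase _ _ (Finset.mem_univ i), if_pos rfl, Real.volume_Ici]
      rw [ENNReal.top_mul]
      rw [Finset.prod_congr rfl (fun j hj => by
        rw [if_neg (Finset.ne_of_mem_erase hj), Real.volume_Icc])]
      simp
    have := key P hPsub (fun x hx => hgood x (hPf x hx))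
    rw [hPvol, ENNReal.mul_top hp.ne'] at this
    exact hC (top_le_iff.mp this)
  push_neg at hpos
  -- some coefficient is negative
  have hsomeneg : ∃ j, a j < 0 := by
    by_contra hno
    push_neg at hno
    have hall0 : ∀ j, a j = 0 := fun j => le_antisymm (hpos j) (hno j)
    obtain ⟨y, hy⟩ := hKint
    have hfy := hf y hy
    rw [hfa y, hfa x₀] at hfy
    simp [hall0] at hfy
  have hfx₀neg : f x₀ < 0 := by
    obtain ⟨j₀, hj₀⟩ := hsomeneg
    rw [hfa x₀, ← Finset.add_sum_erase _ _ (Finset.mem_univ j₀)]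
    have h1 : x₀ j₀ * a j₀ < 0 := mul_neg_of_pos_of_neg (hx₀ j₀) hj₀
    have h2 : ∑ j ∈ Finset.univ.erase j₀, x₀ j * a j ≤ 0 :=
      Finset.sum_nonpos fun j _ => mul_nonpos_of_nonneg_of_nonpos (hx₀ j).le (hpos j)
    linarith
  by_cases hzero : ∃ i, a i = 0
  · -- infinite cylinder in a zero direction
    exfalso
    obtain ⟨i, hi⟩ := hzero
    set S : ℝ := ∑ j, |a j| with hS
    have hS0 : 0 ≤ S := Finset.sum_nonneg fun j _ => abs_nonneg _
    set ε : ℝ := (-f x₀) / (S + 1) with hεdef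
    have hε0 : 0 < ε := by
      apply div_pos (by linarith) (by linarith)
    set P : Set (Fin d → ℝ) :=
      Set.pi Set.univ (fun j => if a j = 0 then Set.Ici 0 else Set.Icc 0 ε) with hP
    have hPsub : P ⊆ {x | ∀ k, 0 ≤ x k} := by
      intro x hx k
      have := hx k (Set.mem_univ k)
      by_cases hk : a k = 0
      · simp only [if_pos hk, Set.mem_Ici] at this; exact this
      · simp only [if_neg hk, Set.mem_Icc] at this; exact this.1
    have hPf : ∀ x ∈ P, f x₀ < f x := by
      intro x hx
      have hterm : ∀ j ∈ Finset.univ, -(|a j| * ε) ≤ x j * a j := by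
        intro j _
        have hmem := hx j (Set.mem_univ j)
        by_cases hj : a j = 0
        · simp [hj]
        · simp only [if_neg hj, Set.mem_Icc] at hmem
          have hjneg : a j < 0 := lt_of_le_of_ne (hpos j) hj
          rw [abs_of_neg hjneg]
          nlinarith [hmem.1, hmem.2]
      have hsum := Finset.sum_le_sum hterm
      rw [hfa x]
      have hls : ∑ j, -(|a j| * ε) = -(S * ε) := by
        rw [Finset.sum_neg_distrib, Finset.sum_mul]
      rw [hls] at hsum
      have hkey : S * ε < -f x₀ := by
        rw [hεdef, mul_div_assoc', div_lt_iff₀ (by linarith)]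
        nlinarith
      linarith
    have hPvol : volume P = ⊤ := by
      rw [hP, volume_pi_pi]
      rw [← Finset.mul_prod_erase _ _ (Finset.mem_univ i), if_pos hi, Real.volume_Ici]
      rw [ENNReal.top_mul]
      rw [Ne, Finset.prod_eq_zero_iff]
      push_neg
      intro j _
      by_cases hj : a j = 0
      · simp [hj]
      · simp only [if_neg hj, Real.volume_Icc, sub_zero]
        exact (ENNReal.ofReal_pos.mpr hε0).ne'
    have := key P hPsub (fun x hx => hgood x (hPf x hx))
    rw [hPvol, ENNReal.mul_top hp.ne'] at this
    exact hC (top_le_iff.mp this)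
  push_neg at hzero
  have hneg : ∀ i, a i < 0 := fun i => lt_of_le_of_ne (hpos i) (hzero i)
  -- main case
  set b : Fin d → ℝ := fun i => -a i with hb
  have hbpos : ∀ i, 0 < b i := fun i => neg_pos.mpr (hneg i)
  set c : ℝ := ∑ i, b i * x₀ i with hc
  have hfx₀c : f x₀ = -c := by
    rw [hfa x₀, hc, ← Finset.sum_neg_distrib]
    exact Finset.sum_congr rfl fun i _ => by simp [hb]; ring
  have hcpos : 0 < c := by
    rw [hfx₀c] at hfx₀neg; linarith
  set D : ℝ := d.factorial * ∏ i, b i with hD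
  have hprodb : 0 < ∏ i, b i := Finset.prod_pos fun i _ => hbpos i
  have hfactpos : (0:ℝ) < d.factorial := Nat.cast_pos.mpr d.factorial_pos
  have hDpos : 0 < D := mul_pos hfactpos hprodb
  have hkey : ∀ c' : ℝ, 0 ≤ c' → c' < c →
      p * ENNReal.ofReal (c' ^ d / D) ≤ C := by
    intro c' hc'0 hc'c
    rw [hD, ← volume_scaled_simplex d b hbpos c' hc'0]
    apply key
    · exact fun x hx => hx.1
    · intro x hx
      apply hgood
      have h1 : ∑ i, b i * x i ≤ c' := hx.2
      have h2 : f x = -∑ i, b i * x i := by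
        rw [hfa x, ← Finset.sum_neg_distrib]
        exact Finset.sum_congr rfl fun i _ => by simp [hb]; ring
      rw [h2, hfx₀c]
      linarith
  have hptop : p ≠ ⊤ := by
    intro hptop
    have hh := hkey (c/2) (by linarith) (by linarith)
    rw [hptop, ENNReal.top_mul (ENNReal.ofReal_pos.mpr (by positivity)).ne'] at hh
    exact hC (top_le_iff.mp hh)
  have hlim : p * ENNReal.ofReal (c ^ d / D) ≤ C := by
    have htends : Filter.Tendsto (fun t : ℝ => p * ENNReal.ofReal (t ^ d / D))
        (nhdsWithin c (Set.Iio c)) (nhds (p * ENNReal.ofReal (c ^ d / D))) := by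
      refine Filter.Tendsto.mono_left ?_ nhdsWithin_le_nhds
      refine ENNReal.Tendsto.const_mul ?_ (Or.inr hptop)
      exact (ENNReal.continuous_ofReal.comp ((continuous_pow d).div_const D)).tendsto c
    refine le_of_tendsto htends ?_
    have hev1 : ∀ᶠ t in nhdsWithin c (Set.Iio c), 0 < t :=
      eventually_nhdsWithin_of_eventually_nhds (eventually_gt_nhds hcpos)
    have hev2 : ∀ᶠ t in nhdsWithin c (Set.Iio c), t ∈ Set.Iio c :=
      eventually_mem_nhdsWithin
    filter_upwards [hev1, hev2] with t ht1 ht2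
    exact hkey t ht1.le ht2
  -- AM-GM
  have hgm : (d:ℝ)^d * ∏ i, (b i * x₀ i) ≤ c ^ d := by
    have hz : ∀ i ∈ (Finset.univ : Finset (Fin d)), (0:ℝ) ≤ b i * x₀ i :=
      fun i _ => (mul_pos (hbpos i) (hx₀ i)).le
    have hwn : ∀ i ∈ (Finset.univ : Finset (Fin d)), (0:ℝ) ≤ 1/d := fun i _ => by positivity
    have hdne : (d:ℝ) ≠ 0 := Nat.cast_ne_zero.mpr hd.ne'
    have hwsum : ∑ _i : Fin d, (1:ℝ)/d = 1 := by
      rw [Finset.sum_const, Finset.card_univ, Fintype.card_fin, nsmul_eq_mul]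
      field_simp
    have hgmw := Real.geom_mean_le_arith_mean_weighted Finset.univ (fun _ => 1/d)
      (fun i => b i * x₀ i) hwn hwsum hz
    rw [Real.finset_prod_rpow Finset.univ _ hz _] at hgmw
    have hrhs : ∑ i, (1:ℝ)/d * (b i * x₀ i) = c / d := by
      rw [hc, ← Finset.mul_sum]
      ring
    rw [hrhs] at hgmw
    have hQ0 : (0:ℝ) ≤ ∏ i, (b i * x₀ i) := Finset.prod_nonneg hz
    have hpow := pow_le_pow_left₀ (Real.rpow_nonneg hQ0 _) hgmw d
    rw [← Real.rpow_natCast ((∏ i, (b i * x₀ i)) ^ ((1:ℝ)/d)) d, ← Real.rpow_mul hQ0,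
      one_div, inv_mul_cancel₀ hdne, Real.rpow_one, div_pow] at hpow
    rw [le_div_iff₀ (by positivity)] at hpow
    linarith [hpow]
  have hVle : (d:ℝ)^d * (∏ i, x₀ i) / d.factorial ≤ c^d / D := by
    rw [hD, div_le_div_iff₀ (by positivity) (by positivity)]
    have hexp : ∏ i, (b i * x₀ i) = (∏ i, b i) * ∏ i, x₀ i := Finset.prod_mul_distrib
    rw [hexp] at hgm
    nlinarith [hgm, hfactpos, hprodb]
  have hprodx : (0:ℝ) < ∏ i, x₀ i := Finset.prod_pos fun i _ => hx₀ i
  have heq : ENNReal.ofReal ((d:ℝ)^d * (∏ i, x₀ i) / d.factorial) * (d.factorial : ℝ≥0∞)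
      = (d:ℝ≥0∞)^d * ENNReal.ofReal (∏ i, x₀ i) := by
    rw [← ENNReal.ofReal_natCast d.factorial, ← ENNReal.ofReal_mul (by positivity),
      div_mul_cancel₀ _ (show ((d.factorial:ℝ)) ≠ 0 from hfactpos.ne'),
      ENNReal.ofReal_mul (by positivity), ENNReal.ofReal_pow (by positivity),
      ENNReal.ofReal_natCast]
  rw [ENNReal.le_div_iff_mul_le
    (Or.inl (mul_ne_zero (pow_ne_zero d (Nat.cast_ne_zero.mpr hd.ne'))
      (ENNReal.ofReal_pos.mpr hprodx).ne'))
    (Or.inl (ENNReal.mul_ne_top (ENNReal.pow_ne_top (ENNReal.natCast_ne_top d))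
      ENNReal.ofReal_ne_top))]
  calc p * ((d:ℝ≥0∞)^d * ENNReal.ofReal (∏ i, x₀ i))
      = p * ENNReal.ofReal ((d:ℝ)^d * (∏ i, x₀ i) / d.factorial) * (d.factorial : ℝ≥0∞) := by
        rw [mul_assoc, heq]
    _ ≤ C * (d.factorial : ℝ≥0∞) := by
        refine mul_le_mul_left ?_ _
        refine le_trans (mul_le_mul_right (ENNReal.ofReal_le_ofReal hVle) p) hlim
    _ = C * (Nat.factorial d : ℝ≥0∞) := rfl
end

section
/- Let h be a decreasing transformation and g a closed proper convex function on ℝ^d with bounded sublevel sets such that h∘g is a probability density; suppose furthermore that h(y) ≥ c·(y − y_∞)^{−β} near y_∞ for some β > d whenever y_∞ = inf{y : h(y) < +∞} > −∞. Then inf g > y_∞. -/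
open MeasureTheory
open scoped ENNReal

theorem inf_above_y_infty (d : ℕ)
    (h : EReal → ℝ≥0∞) (hmono : Antitone h) (hbot : h ⊥ = ⊤) (htop : h ⊤ = 0)
    (g : (Fin d → ℝ) → EReal) (hg : ERealConvex g) (hlsc : LowerSemicontinuous g)
    (hgbot : ∀ x, g x ≠ ⊥) (hgproper : ∃ x, g x ≠ ⊤)
    (hlev : ∀ y : ℝ, Bornology.IsBounded {x | g x ≤ (y : EReal)})
    (hdens : ∫⁻ x, h (g x) ∂volume = 1)
    (htail : ∀ t : ℝ, sInf {y : EReal | h y < ⊤} = (t : EReal) →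
      ∃ β c δ : ℝ, (d : ℝ) < β ∧ 0 < c ∧ 0 < δ ∧
        ∀ y : ℝ, t < y → y < t + δ →
          ENNReal.ofReal (c * (y - t) ^ (-β)) ≤ h (y : EReal)) :
    sInf {y : EReal | h y < ⊤} < ⨅ x, g x := by
  classical
  set S : Set EReal := {y | h y < ⊤} with hS
  -- sublevel sets are closed (hence measurable) and compact
  have hclosed : ∀ y : ℝ, IsClosed {x | g x ≤ (y : EReal)} := fun y =>
    hlsc.isClosed_preimage _
  have hcompact : ∀ y : ℝ, IsCompact {x | g x ≤ (y : EReal)} := fun y =>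
    Metric.isCompact_iff_isClosed_bounded.2 ⟨hclosed y, hlev y⟩
  -- the infimum of g is not ⊥
  have hInfBot : (⨅ x, g x) ≠ ⊥ := by
    intro hb
    have hne : ∀ n : ℕ, {x | g x ≤ ((-(n : ℝ) : ℝ) : EReal)}.Nonempty := by
      intro n
      have hlt : (⨅ x, g x) < ((-(n : ℝ) : ℝ) : EReal) := by
        rw [hb]; exact Ne.bot_lt (EReal.coe_ne_bot _)
      obtain ⟨x, hx⟩ := iInf_lt_iff.1 hlt
      exact ⟨x, hx.le⟩
    obtain ⟨x, hx⟩ := IsCompact.nonempty_iInter_of_sequence_nonempty_isCompact_isClosed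
      (fun n : ℕ => {x | g x ≤ ((-(n : ℝ) : ℝ) : EReal)})
      (fun n => fun x hx => le_trans hx (EReal.coe_le_coe_iff.2 (by push_cast; linarith)))
      hne (hcompact _) (fun n => hclosed _)
    have hxx : ∀ n : ℕ, g x ≤ ((-(n : ℝ) : ℝ) : EReal) := fun n => Set.mem_iInter.1 hx n
    obtain ⟨r, hr⟩ : ∃ r : ℝ, g x = (r : EReal) := by
      have h2 : g x ≠ ⊤ := ne_top_of_le_ne_top (EReal.coe_ne_top _) (hxx 0)
      exact ⟨(g x).toReal, (EReal.coe_toReal h2 (hgbot x)).symm⟩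
    obtain ⟨n, hn⟩ := exists_nat_gt (-r)
    have := EReal.coe_le_coe_iff.1 (hr ▸ hxx n)
    linarith
  -- the set N of points where g is finite
  set N : Set (Fin d → ℝ) := {x | g x ≠ ⊤} with hN
  have hNeq : N = ⋃ n : ℕ, {x | g x ≤ ((n : ℝ) : EReal)} := by
    ext x
    simp only [hN, Set.mem_setOf_eq, Set.mem_iUnion]
    constructor
    · intro hx
      obtain ⟨r, hr⟩ : ∃ r : ℝ, g x = (r : EReal) :=
        ⟨(g x).toReal, (EReal.coe_toReal hx (hgbot x)).symm⟩
      obtain ⟨n, hn⟩ := exists_nat_ge r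
      exact ⟨n, hr ▸ EReal.coe_le_coe_iff.2 hn⟩
    · rintro ⟨n, hn⟩
      exact ne_top_of_le_ne_top (EReal.coe_ne_top _) hn
  have hNmeas : MeasurableSet N := by
    rw [hNeq]
    exact MeasurableSet.iUnion fun n => (hclosed _).measurableSet
  -- h ∘ g is bounded by the indicator of N with value ⊤
  have hupper : (1 : ℝ≥0∞) ≤ ⊤ * volume N := by
    rw [← hdens, ← lintegral_indicator_const hNmeas]
    refine lintegral_mono fun x => ?_
    by_cases hx : x ∈ N
    · simp [Set.indicator_of_mem hx]
    · have hxt : g x = ⊤ := not_not.1 hx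
      simp [Set.indicator_of_notMem hx, hxt, htop]
  have hNpos : volume N ≠ 0 := by
    intro h0
    rw [h0, mul_zero] at hupper
    simp at hupper
  by_cases hbot' : sInf S = ⊥
  · rw [hbot']; exact Ne.bot_lt hInfBot
  by_cases htop' : sInf S = ⊤
  · -- degenerate case: h = ⊤ below ⊤, contradiction with integrability
    exfalso
    have hall : ∀ y : EReal, y ≠ ⊤ → h y = ⊤ := by
      intro y hy
      by_contra hlt
      have hyS : y ∈ S := lt_top_iff_ne_top.2 hlt
      have := sInf_le hyS
      rw [htop'] at this
      exact hy (top_le_iff.1 this)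
    have : (⊤ : ℝ≥0∞) ≤ 1 := by
      rw [← hdens]
      calc (⊤ : ℝ≥0∞) = ⊤ * volume N := (ENNReal.top_mul hNpos).symm
        _ = ∫⁻ x, N.indicator (fun _ => (⊤ : ℝ≥0∞)) x := (lintegral_indicator_const hNmeas ⊤).symm
        _ ≤ ∫⁻ x, h (g x) := by
            refine lintegral_mono fun x => ?_
            by_cases hx : x ∈ N
            · rw [Set.indicator_of_mem hx, hall (g x) hx]
            · simp [Set.indicator_of_notMem hx]
    simp at this
  · -- main case : sInf S is a real number t
    have hEq : sInf S = (((sInf S).toReal : ℝ) : EReal) := (EReal.coe_toReal htop' hbot').symm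
    set t : ℝ := (sInf S).toReal with ht
    obtain ⟨β, c, δ, hβ, hc, hδ, htailb⟩ := htail t hEq
    have hβ0 : 0 < β := lt_of_le_of_lt (Nat.cast_nonneg d) hβ
    -- h is ⊤ at (and below) t
    have hht : h (t : EReal) = ⊤ := by
      apply ENNReal.eq_top_of_forall_nnreal_le
      intro r
      set s : ℝ := min (δ / 2) ((c / ((r : ℝ) + 1)) ^ (β⁻¹)) with hs
      have hr1 : (0 : ℝ) < (r : ℝ) + 1 := by positivity
      have hcr : (0 : ℝ) < c / ((r : ℝ) + 1) := div_pos hc hr1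
      have hspos : 0 < s := lt_min (by linarith) (Real.rpow_pos_of_pos hcr _)
      have hsle : s ≤ (c / ((r : ℝ) + 1)) ^ (β⁻¹) := min_le_right _ _
      have hsd : t + s < t + δ := by
        have := min_le_left (δ / 2) ((c / ((r : ℝ) + 1)) ^ (β⁻¹))
        simp only [hs] at *
        linarith
      -- key : (r+1) ≤ c * s ^ (-β)
      have hsβ : s ^ β ≤ c / ((r : ℝ) + 1) := by
        have h1 : s ^ β ≤ ((c / ((r : ℝ) + 1)) ^ (β⁻¹)) ^ β :=
          Real.rpow_le_rpow hspos.le hsle hβ0.le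
        rwa [← Real.rpow_mul hcr.le, inv_mul_cancel₀ (ne_of_gt hβ0), Real.rpow_one] at h1
      have hsβpos : 0 < s ^ β := Real.rpow_pos_of_pos hspos _
      have hkey : (r : ℝ) + 1 ≤ c * s ^ (-β) := by
        have h3 : (c / ((r : ℝ) + 1))⁻¹ ≤ (s ^ β)⁻¹ := by
          exact inv_anti₀ hsβpos hsβ
        have h4 : c * (c / ((r : ℝ) + 1))⁻¹ ≤ c * (s ^ β)⁻¹ :=
          mul_le_mul_of_nonneg_left h3 hc.le
        have h5 : c * (c / ((r : ℝ) + 1))⁻¹ = (r : ℝ) + 1 := by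
          field_simp
        rw [Real.rpow_neg hspos.le]
        linarith
      calc (r : ℝ≥0∞) = ENNReal.ofReal (r : ℝ) := ENNReal.ofReal_coe_nnreal.symm
        _ ≤ ENNReal.ofReal (c * s ^ (-β)) := ENNReal.ofReal_le_ofReal (by
            have := r.coe_nonneg; linarith)
        _ ≤ h ((t + s : ℝ) : EReal) := by simpa using htailb (t + s) (by linarith) (by linarith)
        _ ≤ h (t : EReal) := hmono (EReal.coe_le_coe_iff.2 (by linarith))
    -- lower bound for h ∘ g on sublevel sets near t
    have hlow : ∀ ε : ℝ, 0 < ε → ε < δ → ∀ z, g z ≤ ((t + ε : ℝ) : EReal) →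
        ENNReal.ofReal (c * ε ^ (-β)) ≤ h (g z) := by
      intro ε hε hεδ z hz
      rcases le_or_gt (g z) ((t : ℝ) : EReal) with hle | hlt
      · have h1 : h ((t : ℝ) : EReal) ≤ h (g z) := hmono hle
        rw [hht] at h1
        rw [top_le_iff.1 h1]
        exact le_top
      · obtain ⟨y, hy⟩ : ∃ y : ℝ, g z = (y : EReal) :=
          ⟨(g z).toReal, (EReal.coe_toReal (ne_top_of_le_ne_top (EReal.coe_ne_top _) hz)
            (hgbot z)).symm⟩
        rw [hy] at hz hlt ⊢
        have h1 : t < y := EReal.coe_lt_coe_iff.1 hlt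
        have h2 : y ≤ t + ε := EReal.coe_le_coe_iff.1 hz
        refine le_trans (ENNReal.ofReal_le_ofReal ?_) (htailb y h1 (by linarith))
        refine mul_le_mul_of_nonneg_left ?_ hc.le
        exact Real.rpow_le_rpow_of_nonpos (by linarith) (by linarith) (by linarith)
    -- a sublevel set with positive volume
    obtain ⟨n, hn⟩ : ∃ n : ℕ, volume {x | g x ≤ ((n : ℝ) : EReal)} ≠ 0 := by
      by_contra hno
      push_neg at hno
      exact hNpos (by rw [hNeq]; exact measure_iUnion_null hno)
    set ε0 : ℝ := max (n : ℝ) (t + 1) - t with hε0def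
    have hε0pos : 0 < ε0 := by
      have := le_max_right (n : ℝ) (t + 1)
      simp only [hε0def]
      linarith
    set A0 : Set (Fin d → ℝ) := {x | g x ≤ ((t + ε0 : ℝ) : EReal)} with hA0
    have hV0 : volume A0 ≠ 0 := by
      intro h0
      apply hn
      refine measure_mono_null (fun x hx => ?_) h0
      refine le_trans hx (EReal.coe_le_coe_iff.2 ?_)
      have := le_max_left (n : ℝ) (t + 1)
      simp only [hε0def]
      linarith
    obtain ⟨v, hv0, hvle⟩ : ∃ v : ℝ, 0 < v ∧ ENNReal.ofReal v ≤ volume A0 := by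
      rcases eq_or_ne (volume A0) ⊤ with hT | hT
      · exact ⟨1, one_pos, by simp [hT]⟩
      · exact ⟨(volume A0).toReal, ENNReal.toReal_pos hV0 hT,
          by rw [ENNReal.ofReal_toReal hT]⟩
    -- suppose towards a contradiction that inf g ≤ t
    rw [hEq]
    by_contra hcon
    push_neg at hcon
    -- choose the scaling factor l
    have hβd : 0 < β - (d : ℝ) := by linarith
    set K : ℝ := c * (2 * ε0) ^ (-β) * v with hK
    have hKpos : 0 < K := by
      have := Real.rpow_pos_of_pos (by linarith : (0:ℝ) < 2 * ε0) (-β)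
      positivity
    set M : ℝ := min K 1 / 2 with hM
    have hMpos : 0 < M := by
      have := lt_min hKpos one_pos
      simp only [hM]
      linarith
    set l : ℝ := min 1 (min (δ / (4 * ε0)) (M ^ (β - (d : ℝ))⁻¹)) with hl
    have hlpos : 0 < l := by
      refine lt_min one_pos (lt_min (by positivity) ?_)
      exact Real.rpow_pos_of_pos hMpos _
    have hl1 : l ≤ 1 := min_le_left _ _
    set ε : ℝ := 2 * l * ε0 with hε
    have hεpos : 0 < ε := by positivity
    have hεδ : ε < δ := by
      have h1 : l ≤ δ / (4 * ε0) := le_trans (min_le_right _ _) (min_le_left _ _)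
      have h2 : ε ≤ 2 * (δ / (4 * ε0)) * ε0 :=
        mul_le_mul_of_nonneg_right (by linarith) hε0pos.le
      have h3 : 2 * (δ / (4 * ε0)) * ε0 = δ / 2 := by
        field_simp
        ring
      rw [h3] at h2
      linarith
    -- the smallness of l gives the key numerical inequality
    have hlKey : l ^ (β - (d : ℝ)) < K := by
      have h1 : l ^ (β - (d : ℝ)) ≤ (M ^ (β - (d : ℝ))⁻¹) ^ (β - (d : ℝ)) :=
        Real.rpow_le_rpow hlpos.le (le_trans (min_le_right _ _) (min_le_right _ _)) hβd.le
      rw [← Real.rpow_mul hMpos.le, inv_mul_cancel₀ (ne_of_gt hβd), Real.rpow_one] at h1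
      have h2 : M < K := by
        have := min_le_left K 1
        simp only [hM]
        cases' le_or_gt K 1 with hK1 hK1
        · rw [min_eq_left hK1]; linarith
        · rw [min_eq_right hK1.le]; linarith
      linarith
    -- approximate minimizer
    obtain ⟨x0, hx0⟩ : ∃ x0, g x0 < ((t + l * ε0 : ℝ) : EReal) := by
      apply iInf_lt_iff.1
      refine lt_of_le_of_lt hcon ?_
      apply EReal.coe_lt_coe_iff.2
      nlinarith
    obtain ⟨u, hu⟩ : ∃ u : ℝ, g x0 = (u : EReal) :=
      ⟨(g x0).toReal, (EReal.coe_toReal (ne_top_of_le_ne_top (EReal.coe_ne_top _) hx0.le)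
        (hgbot x0)).symm⟩
    have hu' : u < t + l * ε0 := EReal.coe_lt_coe_iff.1 (hu ▸ hx0)
    -- the image of A0 under the homothety of ratio l centered at x0
    set T : (Fin d → ℝ) → (Fin d → ℝ) := ⇑(AffineMap.homothety x0 l) with hT
    have himg : ∀ x ∈ T '' A0, g x ≤ ((t + ε : ℝ) : EReal) := by
      rintro _ ⟨y, hy, rfl⟩
      obtain ⟨w, hw⟩ : ∃ w : ℝ, g y = (w : EReal) :=
        ⟨(g y).toReal, (EReal.coe_toReal (ne_top_of_le_ne_top (EReal.coe_ne_top _) hy)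
          (hgbot y)).symm⟩
      have hw' : w ≤ t + ε0 := EReal.coe_le_coe_iff.1 (hw ▸ hy)
      have hTy : T y = l • y + (1 - l) • x0 := by
        simp only [hT, AffineMap.homothety_apply, vsub_eq_sub, vadd_eq_add]
        module
      have hconv := hg y x0 l (1 - l) hlpos.le (by linarith) (by ring)
      rw [hTy]
      refine le_trans hconv ?_
      rw [hw, hu]
      rw [← EReal.coe_mul, ← EReal.coe_mul, ← EReal.coe_add]
      apply EReal.coe_le_coe_iff.2
      nlinarith
    -- measurability of the image
    have hA0compact : IsCompact A0 := hcompact (t + ε0)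
    have hTcont : Continuous T := AffineMap.homothety_continuous x0 l
    have himgMeas : MeasurableSet (T '' A0) := (hA0compact.image hTcont).measurableSet
    -- volume of the image
    have hvol : volume (T '' A0) = ENNReal.ofReal (l ^ d) * volume A0 := by
      have := MeasureTheory.Measure.addHaar_image_homothety (volume : Measure (Fin d → ℝ)) x0 l A0
      rw [hT]
      rw [this]
      congr 2
      rw [Module.finrank_fin_fun ℝ]
      rw [abs_of_nonneg (by positivity)]
    -- the contradiction
    have hlower : ENNReal.ofReal (c * ε ^ (-β)) * volume (T '' A0) ≤ 1 := by
      rw [← hdens, ← lintegral_indicator_const himgMeas]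
      refine lintegral_mono fun x => ?_
      by_cases hx : x ∈ T '' A0
      · rw [Set.indicator_of_mem hx]
        exact hlow ε hεpos hεδ x (himg x hx)
      · simp [Set.indicator_of_notMem hx]
    have e1 : ENNReal.ofReal (c * ε ^ (-β) * (l ^ d * v))
        = ENNReal.ofReal (c * ε ^ (-β)) * ENNReal.ofReal (l ^ d * v) :=
      ENNReal.ofReal_mul (by positivity)
    have e2 : ENNReal.ofReal (l ^ d * v) = ENNReal.ofReal (l ^ d) * ENNReal.ofReal v :=
      ENNReal.ofReal_mul (by positivity)
    have hfinal : ENNReal.ofReal (c * ε ^ (-β) * (l ^ d * v)) ≤ 1 := by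
      rw [e1, e2]
      calc ENNReal.ofReal (c * ε ^ (-β)) * (ENNReal.ofReal (l ^ d) * ENNReal.ofReal v)
          ≤ ENNReal.ofReal (c * ε ^ (-β)) * (ENNReal.ofReal (l ^ d) * volume A0) := by
            gcongr
        _ = ENNReal.ofReal (c * ε ^ (-β)) * volume (T '' A0) := by rw [hvol]
        _ ≤ 1 := hlower
    -- but the left-hand side is > 1
    have hgt : 1 < c * ε ^ (-β) * (l ^ d * v) := by
      have hεeq : ε ^ (-β) = l ^ (-β) * (2 * ε0) ^ (-β) := by
        rw [hε]
        rw [show 2 * l * ε0 = l * (2 * ε0) by ring]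
        rw [Real.mul_rpow hlpos.le (by linarith)]
      have hld : (l : ℝ) ^ d = l ^ ((d : ℝ)) := (Real.rpow_natCast l d).symm
      have hexp : c * ε ^ (-β) * (l ^ d * v) = K * l ^ ((d : ℝ) - β) := by
        rw [hεeq, hld, hK]
        rw [show (d : ℝ) - β = (d : ℝ) + (-β) by ring, Real.rpow_add hlpos]
        ring
      rw [hexp]
      have h2 : l ^ ((d : ℝ) - β) = (l ^ (β - (d : ℝ)))⁻¹ := by
        rw [show (d : ℝ) - β = -(β - (d : ℝ)) by ring, Real.rpow_neg hlpos.le]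
      rw [h2, ← div_eq_mul_inv]
      exact (one_lt_div (Real.rpow_pos_of_pos hlpos _)).2 hlKey
    have hcontra : (1 : ℝ≥0∞) < ENNReal.ofReal (c * ε ^ (-β) * (l ^ d * v)) := by
      rw [← ENNReal.ofReal_one]
      exact (ENNReal.ofReal_lt_ofReal_iff (by linarith)).2 hgt
    exact absurd (lt_of_lt_of_le hcontra hfinal) (lt_irrefl 1)
end

section
/- Let A be a closed convex set in ℝ^d with nonempty interior, and let {B_n} be a sequence of convex sets with A ⊆ B_n and μ(B_n \ A) → 0. Then for every x ∉ A, x belongs to only finitely many of the closures of the B_n; i.e., limsup cl(B_n) = cl(A). -/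
open MeasureTheory Filter

theorem limsup_closure_of_convex_approx_from_above (d : ℕ)
    (A : Set (Fin d → ℝ)) (hA : Convex ℝ A) (hAc : IsClosed A)
    (hAi : (interior A).Nonempty)
    (B : ℕ → Set (Fin d → ℝ)) (hB : ∀ n, Convex ℝ (B n)) (hAB : ∀ n, A ⊆ B n)
    (hvol : Tendsto (fun n => volume (B n \ A)) atTop (nhds 0)) :
    (∀ x ∉ A, {n | x ∈ closure (B n)}.Finite) ∧
      (⋂ N, ⋃ n, ⋃ (_ : N ≤ n), closure (B n)) = closure A := by
  have key : ∀ x ∉ A, {n | x ∈ closure (B n)}.Finite := by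
    intro x hx
    obtain ⟨y, hy⟩ := hAi
    obtain ⟨r, hr, hball⟩ := Metric.isOpen_iff.1 isOpen_interior y hy
    have hballA : Metric.ball y r ⊆ A := hball.trans interior_subset
    obtain ⟨ε, hε, hxε⟩ := Metric.isOpen_iff.1 hAc.isOpen_compl x hx
    set t : ℝ := min (1/2) (ε / (2 * (‖y - x‖ + r))) with ht_def
    have hden : 0 < ‖y - x‖ + r := by positivity
    have ht0 : 0 < t := lt_min (by norm_num) (by positivity)
    have ht1 : t < 1 := lt_of_le_of_lt (min_le_left _ _) (by norm_num)
    set z₀ : Fin d → ℝ := x + t • (y - x) with hz₀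
    have hsub1 : Metric.ball z₀ (t * r) ⊆ Metric.ball x ε := by
      intro z hz
      rw [Metric.mem_ball] at hz ⊢
      have h1 : dist z x ≤ dist z z₀ + dist z₀ x := dist_triangle _ _ _
      have h2 : dist z₀ x = t * ‖y - x‖ := by
        have hzx : z₀ - x = t • (y - x) := by simp [hz₀]
        rw [dist_eq_norm, hzx, norm_smul, Real.norm_eq_abs, abs_of_pos ht0]
      have htle : t * (r + ‖y - x‖) ≤ ε / 2 := by
        have hmin : t ≤ ε / (2 * (‖y - x‖ + r)) := min_le_right _ _
        calc t * (r + ‖y - x‖)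
            ≤ (ε / (2 * (‖y - x‖ + r))) * (r + ‖y - x‖) :=
              mul_le_mul_of_nonneg_right hmin (by positivity)
          _ = ε / 2 := by field_simp; ring
      nlinarith
    have hsub2 : ∀ n, x ∈ closure (B n) →
        Metric.ball z₀ (t * r) ⊆ closure (B n) := by
      intro n hxn z hz
      have hconv : Convex ℝ (closure (B n)) := (hB n).closure
      set w : Fin d → ℝ := y + t⁻¹ • (z - z₀) with hw
      have hwball : w ∈ Metric.ball y r := by
        rw [Metric.mem_ball, dist_eq_norm]
        have hwy : w - y = t⁻¹ • (z - z₀) := by simp [hw]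
        rw [hwy, norm_smul, Real.norm_eq_abs, abs_of_pos (inv_pos.2 ht0)]
        rw [Metric.mem_ball, dist_eq_norm] at hz
        calc t⁻¹ * ‖z - z₀‖ < t⁻¹ * (t * r) :=
              mul_lt_mul_of_pos_left hz (inv_pos.2 ht0)
          _ = r := by field_simp
      have hwB : w ∈ closure (B n) := subset_closure (hAB n (hballA hwball))
      have hcomb : (1 - t) • x + t • w = z := by
        rw [hw, smul_add, smul_inv_smul₀ ht0.ne', hz₀]
        module
      rw [← hcomb]
      exact hconv hxn hwB (by linarith) (le_of_lt ht0) (by ring)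
    set c := volume (Metric.ball z₀ (t * r)) with hc
    have hc0 : 0 < c := Metric.measure_ball_pos _ _ (by positivity)
    obtain ⟨N, hN⟩ := eventually_atTop.1 (hvol (Iio_mem_nhds hc0))
    apply Set.Finite.subset (Set.finite_Iio N)
    intro n hn
    by_contra hnN
    rw [Set.mem_Iio, not_lt] at hnN
    have h1 : Metric.ball z₀ (t * r) ⊆ closure (B n) \ A := fun z hz =>
      ⟨hsub2 n hn hz, hxε (hsub1 hz)⟩
    have h2 : closure (B n) \ A ⊆ (B n \ A) ∪ frontier (B n) := by
      rintro z ⟨hz1, hz2⟩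
      by_cases hzB : z ∈ B n
      · exact Or.inl ⟨hzB, hz2⟩
      · exact Or.inr ⟨hz1, fun h => hzB (interior_subset h)⟩
    have h3 : volume (frontier (B n)) = 0 := (hB n).addHaar_frontier volume
    have hle : c ≤ volume (B n \ A) := by
      calc c ≤ volume (closure (B n) \ A) := measure_mono h1
        _ ≤ volume (B n \ A) + volume (frontier (B n)) :=
            (measure_mono h2).trans (measure_union_le _ _)
        _ = volume (B n \ A) := by rw [h3, add_zero]
    exact absurd (hN n hnN) (not_lt.2 hle)
  refine ⟨key, ?_⟩
  rw [hAc.closure_eq]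
  ext x
  simp only [Set.mem_iInter, Set.mem_iUnion]
  constructor
  · intro h
    by_contra hx
    obtain ⟨N, hN⟩ := (key x hx).bddAbove
    obtain ⟨n, hn, hxn⟩ := h (N + 1)
    have : n ≤ N := hN hxn
    omega
  · intro hxA N
    exact ⟨N, le_refl N, subset_closure (hAB N hxA)⟩
end

section
/- Let A be a closed convex set in ℝ^d with nonempty interior, and let {C_n} be a sequence of convex sets with C_n ⊆ A and μ(A \ C_n) → 0. Then every point of the interior of A belongs to all but finitely many C_n; i.e., liminf ri(C_n) ⊇ ri(A). -/
open MeasureTheory Filter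

theorem liminf_interior_of_convex_approx_from_below (d : ℕ)
    (A : Set (Fin d → ℝ)) (hA : Convex ℝ A) (hAc : IsClosed A)
    (hAi : (interior A).Nonempty)
    (C : ℕ → Set (Fin d → ℝ)) (hC : ∀ n, Convex ℝ (C n)) (hCA : ∀ n, C n ⊆ A)
    (hvol : Tendsto (fun n => volume (A \ C n)) atTop (nhds 0)) :
    (∀ x ∈ interior A, {n | x ∉ C n}.Finite) ∧
      intrinsicInterior ℝ A ⊆ ⋃ N, ⋂ n, ⋂ (_ : N ≤ n), intrinsicInterior ℝ (C n) := by
  have key : ∀ x ∈ interior A, ∃ N, ∀ n, N ≤ n → x ∈ C n := by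
    intro x hx
    obtain ⟨ε, hε, hball⟩ := Metric.mem_nhds_iff.1 (mem_interior_iff_mem_nhds.1 hx)
    have hballA : Metric.ball x ε ⊆ A := hball
    set b : ENNReal := volume (Metric.ball x ε) with hb
    have hb0 : 0 < b := Metric.measure_ball_pos _ _ hε
    have hbt : b ≠ ⊤ := (MeasureTheory.measure_ball_lt_top).ne
    have hhalf : (0 : ENNReal) < b / 2 := ENNReal.div_pos hb0.ne' (by norm_num)
    have hev : ∀ᶠ n in atTop, volume (A \ C n) < b / 2 :=
      hvol.eventually_lt_const hhalf
    obtain ⟨N, hN⟩ := eventually_atTop.1 hev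
    refine ⟨N, fun n hn => ?_⟩
    by_contra hxC
    -- reflection map
    have hcover : Metric.ball x ε ⊆
        (Metric.ball x ε \ C n) ∪ ((fun y => (2 : ℝ) • x - y) ⁻¹' (Metric.ball x ε \ C n)) := by
      intro y hy
      by_cases hyC : y ∈ C n
      · right
        have hrefl : (2 : ℝ) • x - y ∈ Metric.ball x ε := by
          rw [Metric.mem_ball] at hy ⊢
          have : dist ((2 : ℝ) • x - y) x = dist y x := by
            rw [dist_eq_norm, dist_eq_norm]
            have : (2 : ℝ) • x - y - x = -(y - x) := by
              rw [two_smul]; abel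
            rw [this, norm_neg]
          rwa [this]
        refine ⟨hrefl, fun hmem => hxC ?_⟩
        have := hC n hyC hmem (by norm_num : (0:ℝ) ≤ 1/2) (by norm_num : (0:ℝ) ≤ 1/2)
          (by norm_num)
        have hxeq : (1/2 : ℝ) • y + (1/2 : ℝ) • ((2 : ℝ) • x - y) = x := by
          module
        rwa [hxeq] at this
      · exact Or.inl ⟨hy, hyC⟩
    have hpre : volume ((fun y => (2 : ℝ) • x - y) ⁻¹' (Metric.ball x ε \ C n))
        = volume (Metric.ball x ε \ C n) := by
      have hcomp : (fun y : Fin d → ℝ => (2 : ℝ) • x - y)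
          = (fun y => (2 : ℝ) • x + y) ∘ (fun y => -y) := by
        funext y; simp [sub_eq_add_neg]
      rw [hcomp, Set.preimage_comp, Measure.measure_preimage_neg, measure_preimage_add]
    have hmono : volume (Metric.ball x ε \ C n) ≤ volume (A \ C n) :=
      measure_mono (Set.diff_subset_diff_left hballA)
    have hle : b ≤ 2 * volume (A \ C n) := by
      calc b ≤ volume ((Metric.ball x ε \ C n)
            ∪ ((fun y => (2 : ℝ) • x - y) ⁻¹' (Metric.ball x ε \ C n))) :=
          measure_mono hcover
        _ ≤ volume (Metric.ball x ε \ C n)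
            + volume ((fun y => (2 : ℝ) • x - y) ⁻¹' (Metric.ball x ε \ C n)) :=
          measure_union_le _ _
        _ = 2 * volume (Metric.ball x ε \ C n) := by rw [hpre, two_mul]
        _ ≤ 2 * volume (A \ C n) := by exact mul_le_mul_right hmono 2
    have hlt : 2 * volume (A \ C n) < b := by
      calc 2 * volume (A \ C n) < 2 * (b / 2) :=
          ENNReal.mul_lt_mul_iff_right (by norm_num) (by norm_num) |>.2 (hN n hn)
        _ = b := ENNReal.mul_div_cancel (by norm_num) (by norm_num)
    exact absurd hle (not_le.2 hlt)
  constructor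
  · intro x hx
    obtain ⟨N, hN⟩ := key x hx
    exact (Set.finite_Iio N).subset fun n hn => by
      by_contra h
      exact hn (hN n (not_lt.1 h))
  · -- intrinsicInterior A ⊆ interior A since affineSpan = ⊤
    have hspan : affineSpan ℝ A = ⊤ := hA.interior_nonempty_iff_affineSpan_eq_top.1 hAi
    have hsub : intrinsicInterior ℝ A ⊆ interior A := by
      rintro x ⟨y, hy, rfl⟩
      have hopen : IsOpen ((affineSpan ℝ A : Set (Fin d → ℝ))) := by
        rw [hspan]; exact isOpen_univ
      have h1 := hopen.isOpenEmbedding_subtypeVal.isOpenMap.image_interior_subset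
        (Subtype.val ⁻¹' A) (Set.mem_image_of_mem _ hy)
      exact interior_mono (Set.image_preimage_subset _ _) h1
    intro x hx
    have hxint : x ∈ interior A := hsub hx
    obtain ⟨bb, hxb, hbA⟩ :=
      exists_mem_interior_convexHull_affineBasis (isOpen_interior.mem_nhds hxint)
    -- each vertex is in interior A
    have hvert : ∀ i, bb i ∈ interior A := fun i =>
      hbA (subset_convexHull ℝ _ (Set.mem_range_self i))
    choose Nf hNf using fun i => key (bb i) (hvert i)
    set N := Finset.univ.sup Nf with hNdef
    refine Set.mem_iUnion.2 ⟨N, Set.mem_iInter.2 fun n => Set.mem_iInter.2 fun hn => ?_⟩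
    have hrange : Set.range bb ⊆ C n := by
      rintro _ ⟨i, rfl⟩
      exact hNf i n (le_trans (Finset.le_sup (Finset.mem_univ i)) hn)
    have hhull : convexHull ℝ (Set.range bb) ⊆ C n := convexHull_min hrange (hC n)
    exact interior_subset_intrinsicInterior (interior_mono hhull hxb)
end
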